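/- Let α be a unital twisted partial action of a group G on a unital ring R. If the partial crossed product R*_{α,w}G is right artinian (respectively right noetherian, semilocal), then R is right artinian (respectively right noetherian, semilocal). -/

import Mathlib

/-- A unital twisted partial action of a group `G` on a unital ring `R`
(Dokuchaev–Exel–Simón).  The ideal `D g` is the ideal generated by the central
idempotent `e g`, i.e. `D g = {x | e g * x = x}`;  `act g` is the isomorphism
`α_g : D g⁻¹ → D g` (its values outside `D g⁻¹` are irrelevant) with inverse
`inv g`, and `w g h` is the invertible twisting element of `D g * D (g*h)`
with inverse `winv g h`. -/
structure UnitalTwistedPartialAction (G : Type) [Group G] (R : Type) [Ring R] where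
  e : G → R
  idem : ∀ g, e g * e g = e g
  central : ∀ g r, e g * r = r * e g
  e_one : e 1 = 1
  act : G → R → R
  inv : G → R → R
  w : G → G → R
  winv : G → G → R
  act_mem : ∀ g x, e g⁻¹ * x = x → e g * act g x = act g x
  act_add : ∀ g x y, e g⁻¹ * x = x → e g⁻¹ * y = y →
    act g (x + y) = act g x + act g y
  act_mul : ∀ g x y, e g⁻¹ * x = x → e g⁻¹ * y = y →
    act g (x * y) = act g x * act g y
  inv_act : ∀ g x, e g⁻¹ * x = x → inv g (act g x) = x
  act_inv : ∀ g x, e g * x = x → act g (inv g x) = x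
  act_one : ∀ x, act 1 x = x
  -- α_g(D_{g⁻¹} D_h) = D_g D_{gh}
  act_range : ∀ g h x, e g⁻¹ * x = x → e h * x = x → e (g * h) * act g x = act g x
  act_range' : ∀ g h y, e g * y = y → e (g * h) * y = y →
    ∃ x, e g⁻¹ * x = x ∧ e h * x = x ∧ act g x = y
  w_mem : ∀ g h, e g * w g h = w g h ∧ e (g * h) * w g h = w g h
  w_winv : ∀ g h, w g h * winv g h = e g * e (g * h)
  winv_w : ∀ g h, winv g h * w g h = e g * e (g * h)
  w_one_left : ∀ g, w 1 g = e g
  w_one_right : ∀ g, w g 1 = e g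
  -- α_g ∘ α_h (a) = w_{g,h} α_{gh}(a) w_{g,h}⁻¹  for a ∈ D_{h⁻¹} D_{(gh)⁻¹}
  comp : ∀ g h a, e h⁻¹ * a = a → e (h⁻¹ * g⁻¹) * a = a →
    act g (act h a) = w g h * act (g * h) a * winv g h
  -- the cocycle identity α_g(a w_{h,t}) w_{g,ht} = α_g(a) w_{g,h} w_{gh,t}
  cocycle : ∀ g h t a, e g⁻¹ * a = a → e h * a = a → e (h * t) * a = a →
    act g (a * w h t) * w g (h * t) = act g a * w g h * w (g * h) t

/-- A realization of the partial crossed product `R *_{α,w} G`:  a ring `A`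
together with maps `δ g : D g → A` (written as maps `R → A` that only depend
on the `D g`-component) such that `A = ⊕_{g ∈ G} δ g (D g)` with the crossed
product multiplication `(a δ_g)(b δ_h) = α_g(α_g⁻¹(a) b) w_{g,h} δ_{gh}`. -/
structure IsCrossedProduct {G R : Type} [Group G] [Ring R]
    (pa : UnitalTwistedPartialAction G R) (A : Type) [Ring A]
    (δ : G → R → A) : Prop where
  proj : ∀ g a, δ g a = δ g (pa.e g * a)
  add : ∀ g a b, δ g (a + b) = δ g a + δ g b
  mul : ∀ g h a b, pa.e g * a = a → pa.e h * b = b →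
    δ g a * δ h b = δ (g * h) (pa.act g (pa.inv g a * b) * pa.w g h)
  one : δ 1 1 = 1
  indep : ∀ (s : Finset G) (a : G → R), (∀ g, pa.e g * a g = a g) →
    (∑ g ∈ s, δ g (a g)) = 0 → ∀ g ∈ s, a g = 0
  span : ∀ x : A, ∃ (s : Finset G) (a : G → R),
    (∀ g, pa.e g * a g = a g) ∧ x = ∑ g ∈ s, δ g (a g)

/-- A ring is semilocal if it is semisimple modulo its Jacobson radical. -/
def IsSemilocalRing (A : Type) [Ring A] : Prop :=
  IsSemisimpleRing (TwoSidedIdeal.jacobson (⊥ : TwoSidedIdeal A)).ringCon.Quotient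

/-- A ring is semiprimary if it is semilocal and its Jacobson radical is nilpotent. -/
def IsSemiprimaryRing' (A : Type) [Ring A] : Prop :=
  IsSemilocalRing A ∧ ∃ n : ℕ, 0 < n ∧ ∀ f : Fin n → A,
    (∀ i, f i ∈ TwoSidedIdeal.jacobson (⊥ : TwoSidedIdeal A)) →
      (List.ofFn f).prod = 0

/-- A ring is right artinian iff its opposite ring is (left) artinian. -/
def IsRightArtinianRing (A : Type) [Ring A] : Prop := IsArtinianRing Aᵐᵒᵖ

/-- A ring is right noetherian iff its opposite ring is (left) noetherian. -/
def IsRightNoetherianRing (A : Type) [Ring A] : Prop := IsNoetherianRing Aᵐᵒᵖ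


namespace BRCP

variable {S : Type} [Ring S]

theorem isUnit_of_left_inv [IsNoetherianRing S] {w y : S} (h : y * w = 1) : IsUnit w := by
  have hs : Function.Surjective (LinearMap.toSpanSingleton S S w) := by
    intro x
    refine ⟨x * y, ?_⟩
    simp only [LinearMap.toSpanSingleton_apply, smul_eq_mul]
    rw [mul_assoc, h, mul_one]
  have hinj := IsNoetherian.injective_of_surjective_endomorphism _ hs
  have hwy : w * y = 1 := by
    have h0 : (LinearMap.toSpanSingleton S S w) (w * y) = (LinearMap.toSpanSingleton S S w) 1 := by
      simp only [LinearMap.toSpanSingleton_apply, smul_eq_mul]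
      rw [mul_assoc, h, mul_one, one_mul]
    exact hinj h0
  exact ⟨⟨w, y, hwy, h⟩, rfl⟩

theorem span_mul_le (u y : S) : Ideal.span ({u * y} : Set S) ≤ Ideal.span {y} := by
  rw [Ideal.span_le, Set.singleton_subset_iff]
  exact Ideal.mul_mem_left _ u (Ideal.subset_span rfl)

theorem key_unit [IsNoetherianRing S] (y x : S)
    (h : y ∈ Ideal.span ({(1 - y * x) * y} : Set S)) : IsUnit (1 - y * x) := by
  obtain ⟨t, ht⟩ := Submodule.mem_span_singleton.mp h
  rw [smul_eq_mul] at ht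
  have hzy : (1 - t * ((1 - y * x))) * y = 0 := by
    rw [sub_mul, one_mul, mul_assoc, ht, sub_self]
  have hz : (1 - t * (1 - y * x)) * (1 - y * x) = 1 - t * (1 - y * x) := by
    have h2 : (1 - t * (1 - y * x)) * (y * x) = 0 := by
      rw [← mul_assoc, hzy, zero_mul]
    calc (1 - t * (1 - y * x)) * (1 - y * x)
        = (1 - t * (1 - y * x)) - (1 - t * (1 - y * x)) * (y * x) := by noncomm_ring
      _ = 1 - t * (1 - y * x) := by rw [h2, sub_zero]
  have h1 : (1 + t - t * (1 - y * x)) * (1 - y * x) = 1 := by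
    have h3 : (1 + t - t * (1 - y * x)) * (1 - y * x)
        = (1 - t * (1 - y * x)) * (1 - y * x) + t * (1 - y * x) := by noncomm_ring
    rw [h3, hz]
    noncomm_ring
  exact isUnit_of_left_inv h1

theorem isUnit_swap {a b : S} (h : IsUnit (1 - a * b)) : IsUnit (1 - b * a) := by
  obtain ⟨u, hu⟩ := h
  set v : S := ↑u⁻¹ with hv
  have hv1 : (1 - a * b) * v = 1 := by rw [← hu]; exact u.mul_inv
  have hv2 : v * (1 - a * b) = 1 := by rw [← hu]; exact u.inv_mul
  have habv : a * b * v = v - 1 := by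
    have h' : v - a * b * v = 1 := by
      calc v - a * b * v = (1 - a * b) * v := by noncomm_ring
        _ = 1 := hv1
    rw [← h', sub_sub_cancel]
  have hvab : v * (a * b) = v - 1 := by
    have h' : v - v * (a * b) = 1 := by
      calc v - v * (a * b) = v * (1 - a * b) := by noncomm_ring
        _ = 1 := hv2
    rw [← h', sub_sub_cancel]
  refine ⟨⟨1 - b * a, 1 + b * v * a, ?_, ?_⟩, rfl⟩
  · calc (1 - b * a) * (1 + b * v * a)
        = 1 - b * a + b * v * a - b * (a * b * v) * a := by noncomm_ring
    _ = 1 := by rw [habv]; noncomm_ring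
  · calc (1 + b * v * a) * (1 - b * a)
        = 1 - b * a + b * v * a - b * (v * (a * b)) * a := by noncomm_ring
    _ = 1 := by rw [hvab]; noncomm_ring

theorem mem_jacobson_of_unit {c : S} (h : ∀ x : S, IsUnit (1 - c * x)) :
    c ∈ TwoSidedIdeal.jacobson (⊥ : TwoSidedIdeal S) := by
  rw [TwoSidedIdeal.mem_jacobson_iff]
  intro y
  have h1 : IsUnit (1 + y * c) := by
    have := isUnit_swap (a := c) (b := -y) (by simpa using h (-y))
    simpa [sub_neg_eq_add] using this
  obtain ⟨u, hu⟩ := h1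
  refine ⟨↑u⁻¹, ?_⟩
  rw [TwoSidedIdeal.mem_bot]
  have hui : (↑u⁻¹ : S) * (y * c + 1) = 1 := by
    rw [show y * c + 1 = 1 + y * c from add_comm _ _, ← hu]; exact u.inv_mul
  calc (↑u⁻¹ : S) * y * c + ↑u⁻¹ - 1 = ↑u⁻¹ * (y * c + 1) - 1 := by noncomm_ring
    _ = 0 := by rw [hui, sub_self]

theorem isUnit_one_add_jacobson {j : S}
    (hj : j ∈ TwoSidedIdeal.jacobson (⊥ : TwoSidedIdeal S)) : IsUnit (1 + j) := by
  have hli : ∀ j' : S, j' ∈ TwoSidedIdeal.jacobson (⊥ : TwoSidedIdeal S) →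
      ∃ z : S, z * (1 + j') = 1 := by
    intro j' hj'
    obtain ⟨z, hz⟩ := TwoSidedIdeal.mem_jacobson_iff.mp hj' 1
    rw [TwoSidedIdeal.mem_bot] at hz
    refine ⟨z, ?_⟩
    calc z * (1 + j') = (z * 1 * j' + z - 1) + 1 := by noncomm_ring
      _ = 1 := by rw [hz, zero_add]
  obtain ⟨z, hz1⟩ := hli j hj
  have hzmem : -(z * j) ∈ TwoSidedIdeal.jacobson (⊥ : TwoSidedIdeal S) :=
    TwoSidedIdeal.neg_mem _ (TwoSidedIdeal.mul_mem_left _ z j hj)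
  obtain ⟨z₂, hz2⟩ := hli _ hzmem
  have hzz : 1 + -(z * j) = z := by
    have hadd : z + z * j = 1 := by
      calc z + z * j = z * (1 + j) := by noncomm_ring
        _ = 1 := hz1
    rw [← hadd]; exact add_neg_cancel_right _ _
  rw [hzz] at hz2
  have hz₂ : z₂ = 1 + j := by
    calc z₂ = z₂ * (z * (1 + j)) := by rw [hz1, mul_one]
      _ = (z₂ * z) * (1 + j) := by rw [mul_assoc]
      _ = 1 + j := by rw [hz2, one_mul]
  refine ⟨⟨1 + j, z, ?_, hz1⟩, rfl⟩
  rw [← hz₂]; exact hz2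

theorem isUnit_one_sub_jacobson {j : S}
    (hj : j ∈ TwoSidedIdeal.jacobson (⊥ : TwoSidedIdeal S)) : IsUnit (1 - j) := by
  have := isUnit_one_add_jacobson (TwoSidedIdeal.neg_mem _ hj)
  simpa [sub_eq_add_neg] using this

theorem isUnit_of_left_right {a b c : S} (hba : b * a = 1) (hac : a * c = 1) : IsUnit a := by
  have hbc : b = c := by
    calc b = b * (a * c) := by rw [hac, mul_one]
      _ = (b * a) * c := by rw [mul_assoc]
      _ = c := by rw [hba, one_mul]
  exact ⟨⟨a, c, hac, by rw [← hbc]; exact hba⟩, rfl⟩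

end BRCP

namespace BRCP

theorem idem_helper {T : Type} [Ring T] {b d : T} (hb : b * b = b) (hd : d * d = d)
    (hdb : d * b = d) : (b - b * d) * (b - b * d) = b - b * d := by
  have h1 : (b - b * d) * b = b - b * d := by
    rw [sub_mul, mul_assoc, hdb, hb]
  have h2 : (b - b * d) * d = 0 := by
    rw [sub_mul, mul_assoc, hd, sub_self]
  calc (b - b * d) * (b - b * d)
      = (b - b * d) * b - ((b - b * d) * b) * d := by rw [mul_sub, ← mul_assoc]
    _ = b - b * d := by rw [h1, h2, sub_zero]

theorem orth_helper {T : Type} [Ring T] {b d B D : T} (hbB : b * B = b) (hbD : b * D = b)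
    (hdB : d * B = d) (hdD : d * D = d) : (b - b * d) * (B - B * D) = 0 := by
  have hxB : (b - b * d) * B = b - b * d := by rw [sub_mul, mul_assoc, hdB, hbB]
  have hxD : (b - b * d) * D = b - b * d := by rw [sub_mul, mul_assoc, hdD, hbD]
  calc (b - b * d) * (B - B * D)
      = (b - b * d) * B - ((b - b * d) * B) * D := by rw [mul_sub, ← mul_assoc]
    _ = 0 := by rw [hxB, hxD, sub_self]

theorem sup_span_idem {T : Type} [Ring T] {e g : T} (he : e * e = e) (hgg : g * g = g)
    (hge : g * e = 0) :
    ∃ h : T, h * h = h ∧ Ideal.span {e} ⊔ Ideal.span {g} = Ideal.span {h} := by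
  have heh : e * (e + g - e * g) = e := by
    calc e * (e + g - e * g) = e * e + e * g - e * e * g := by
          rw [mul_sub, mul_add, ← mul_assoc]
      _ = e := by rw [he, add_sub_cancel_right]
  have hgh : g * (e + g - e * g) = g := by
    calc g * (e + g - e * g) = g * e + g * g - g * e * g := by
          rw [mul_sub, mul_add, ← mul_assoc]
      _ = g := by rw [hge, hgg, zero_mul, zero_add, sub_zero]
  refine ⟨e + g - e * g, ?_, ?_⟩
  · calc (e + g - e * g) * (e + g - e * g)
        = e * (e + g - e * g) + g * (e + g - e * g) - e * (g * (e + g - e * g)) := by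
          rw [sub_mul, add_mul, mul_assoc]
      _ = e + g - e * g := by rw [heh, hgh]
  · refine le_antisymm (sup_le ?_ ?_) ?_
    · rw [Ideal.span_le, Set.singleton_subset_iff]
      exact Submodule.mem_span_singleton.mpr ⟨e, by rw [smul_eq_mul, heh]⟩
    · rw [Ideal.span_le, Set.singleton_subset_iff]
      exact Submodule.mem_span_singleton.mpr ⟨g, by rw [smul_eq_mul, hgh]⟩
    · rw [Ideal.span_le, Set.singleton_subset_iff]
      have h1 : e + g - e * g = e + (1 - e) * g := by noncomm_ring
      rw [h1]
      exact Submodule.add_mem _ (Submodule.mem_sup_left (Ideal.subset_span rfl))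
        (Submodule.mem_sup_right (Submodule.mem_span_singleton.mpr ⟨1 - e, rfl⟩))

theorem semilocal_of_local {R S : Type} [Ring R] [Ring S] [IsSemisimpleRing S]
    (φ : R →+* S) (hloc : ∀ r : R, IsUnit (φ r) → IsUnit r) :
    IsSemisimpleRing (TwoSidedIdeal.jacobson (⊥ : TwoSidedIdeal R)).ringCon.Quotient := by
  set J : TwoSidedIdeal R := TwoSidedIdeal.jacobson (⊥ : TwoSidedIdeal R) with hJ
  let p : R →+* J.ringCon.Quotient := J.ringCon.mk'
  have hp : Function.Surjective p := fun t => Quot.inductionOn t (fun a => ⟨a, rfl⟩)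
  have hker : ∀ c : R, c ∈ J → p c = 0 := by
    intro c hc
    have h1 : J.ringCon c 0 := hc
    have h2 : (c : J.ringCon.Quotient) = ((0 : R) : J.ringCon.Quotient) := (RingCon.eq _).mpr h1
    calc p c = ((0 : R) : J.ringCon.Quotient) := h2
      _ = 0 := RingCon.coe_zero _
  -- von Neumann regularity of the quotient
  have vnr : ∀ t : J.ringCon.Quotient, ∃ u, t * u * t = t := by
    intro t
    obtain ⟨a, rfl⟩ := hp t
    obtain ⟨I, hImem, hImin⟩ := IsArtinian.set_has_minimal (R := S) (M := S)
      (Set.range fun b : R => Ideal.span ({φ (a - a * b * a)} : Set S)) ⟨_, ⟨0, rfl⟩⟩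
    obtain ⟨b₀, rfl⟩ := hImem
    have hcx : ∀ x : R, IsUnit (1 - (a - a * b₀ * a) * x) := by
      intro x
      set c : R := a - a * b₀ * a with hc
      have hident : a - a * (b₀ + (1 - b₀ * a) * x * (1 - a * b₀)) * a = c - c * x * c := by
        rw [hc]; noncomm_ring
      have hform : φ (c - c * x * c) = (1 - φ c * φ x) * φ c := by
        rw [map_sub, map_mul, map_mul]; noncomm_ring
      have hle : Ideal.span ({φ (c - c * x * c)} : Set S) ≤ Ideal.span {φ c} := by
        rw [hform]; exact span_mul_le _ _
      have hmem2 : Ideal.span ({φ (c - c * x * c)} : Set S) ∈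
          Set.range fun b : R => Ideal.span ({φ (a - a * b * a)} : Set S) :=
        ⟨b₀ + (1 - b₀ * a) * x * (1 - a * b₀), by dsimp only; rw [hident]⟩
      have heq : Ideal.span ({φ (c - c * x * c)} : Set S) = Ideal.span {φ c} :=
        hle.eq_of_not_lt (hImin _ hmem2)
      have hmem3 : φ c ∈ Ideal.span ({(1 - φ c * φ x) * φ c} : Set S) := by
        rw [← hform, heq]; exact Ideal.subset_span rfl
      have := key_unit (φ c) (φ x) hmem3
      have hφu : IsUnit (φ (1 - c * x)) := by
        rw [map_sub, map_one, map_mul]; exact this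
      exact hloc _ hφu
    have hcJ : (a - a * b₀ * a) ∈ J := mem_jacobson_of_unit hcx
    refine ⟨p b₀, ?_⟩
    have := hker _ hcJ
    rw [map_sub, map_mul, map_mul] at this
    rw [sub_eq_zero] at this
    exact this.symm
  -- no infinite one-sided-orthogonal sequences of nonzero idempotents
  have nochain : ∀ f : ℕ → J.ringCon.Quotient, (∀ n, f n * f n = f n) →
      (∀ i j, i < j → f i * f j = 0) → (∀ n, f n ≠ 0) → False := by
    intro f hidem horth hne
    choose g hg using fun n => hp (f n)
    let r : ℕ → R := fun n => Nat.rec 1 (fun m rm => rm - rm * g m * rm) n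
    have hrs : ∀ n, r (n + 1) = r n - r n * g n * r n := fun n => rfl
    have habs : ∀ n m, n ≤ m → p (r n) * f m = f m := by
      intro n
      induction n with
      | zero => intro m _; show p 1 * f m = f m; rw [map_one, one_mul]
      | succ k ih =>
        intro m hm
        have hkm : k ≤ m := Nat.le_of_succ_le hm
        have hkm' : k < m := hm
        rw [hrs, map_sub, map_mul, map_mul, hg, sub_mul,
          mul_assoc (p (r k) * f k) (p (r k)) (f m), ih m hkm,
          mul_assoc (p (r k)) (f k) (f m), horth k m hkm', mul_zero, sub_zero]
    have hdesc : ∀ n, Ideal.span ({φ (r (n + 1))} : Set S) < Ideal.span {φ (r n)} := by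
      intro n
      have hform : φ (r (n + 1)) = (1 - φ (r n) * φ (g n)) * φ (r n) := by
        rw [hrs, map_sub, map_mul, map_mul]; noncomm_ring
      refine lt_of_le_of_ne (by rw [hform]; exact span_mul_le _ _) ?_
      intro heq
      have hmem3 : φ (r n) ∈ Ideal.span ({(1 - φ (r n) * φ (g n)) * φ (r n)} : Set S) := by
        rw [← hform, heq]; exact Ideal.subset_span rfl
      have hu := key_unit (φ (r n)) (φ (g n)) hmem3
      have hφu : IsUnit (φ (1 - r n * g n)) := by
        rw [map_sub, map_one, map_mul]; exact hu
      have hRu : IsUnit (1 - r n * g n) := hloc _ hφu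
      have hTu : IsUnit ((1 : J.ringCon.Quotient) - f n) := by
        have := hRu.map p
        rw [map_sub, map_one, map_mul, hg, habs n n le_rfl] at this
        exact this
      obtain ⟨u, hu'⟩ := hTu
      have : f n = 0 := by
        have h0 : f n * ((1 : J.ringCon.Quotient) - f n) = 0 := by
          rw [mul_sub, mul_one, hidem, sub_self]
        calc f n = f n * ((1 - f n) * ↑u⁻¹) := by
              rw [← hu', u.mul_inv, mul_one]
          _ = (f n * (1 - f n)) * ↑u⁻¹ := by rw [mul_assoc]
          _ = 0 := by rw [h0, zero_mul]
      exact hne n this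
    obtain ⟨I, ⟨n, rfl⟩, hImin⟩ := IsArtinian.set_has_minimal (R := S) (M := S)
      (Set.range fun n => Ideal.span ({φ (r n)} : Set S)) ⟨_, ⟨0, rfl⟩⟩
    exact hImin _ ⟨n + 1, rfl⟩ (hdesc n)
  -- every principal left ideal is generated by an idempotent
  have idemspan : ∀ t : J.ringCon.Quotient, ∃ e, e * e = e ∧
      Ideal.span {t} = Ideal.span {e} := by
    intro t
    obtain ⟨u, hu⟩ := vnr t
    refine ⟨u * t, ?_, ?_⟩
    · calc (u * t) * (u * t) = u * (t * u * t) := by rw [mul_assoc, ← mul_assoc t u t]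
        _ = u * t := by rw [hu]
    · refine le_antisymm ?_ ?_
      · rw [Ideal.span_le, Set.singleton_subset_iff]
        exact Submodule.mem_span_singleton.mpr ⟨t, by rw [smul_eq_mul, ← mul_assoc, hu]⟩
      · rw [Ideal.span_le, Set.singleton_subset_iff]
        exact Submodule.mem_span_singleton.mpr ⟨u, by rw [smul_eq_mul]⟩
  -- sup of two idempotent-generated ideals is idempotent-generated
  have supidem : ∀ e f : J.ringCon.Quotient, e * e = e → f * f = f →
      ∃ h, h * h = h ∧ Ideal.span {e} ⊔ Ideal.span {f} = Ideal.span {h} := by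
    intro e f he hf
    obtain ⟨u, hu⟩ := vnr (f - f * e)
    have hce : (f - f * e) * e = 0 := by rw [sub_mul, mul_assoc, he, sub_self]
    have hge : (u * (f - f * e)) * e = 0 := by rw [mul_assoc, hce, mul_zero]
    have hgg : (u * (f - f * e)) * (u * (f - f * e)) = u * (f - f * e) := by
      calc u * (f - f * e) * (u * (f - f * e))
          = u * ((f - f * e) * u * (f - f * e)) := by
            rw [mul_assoc, ← mul_assoc (f - f * e) u (f - f * e)]
        _ = u * (f - f * e) := by rw [hu]
    have hcg : (f - f * e) * (u * (f - f * e)) = f - f * e := by rw [← mul_assoc, hu]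
    have hspan_cg : Ideal.span ({f - f * e} : Set J.ringCon.Quotient)
        = Ideal.span {u * (f - f * e)} := by
      refine le_antisymm ?_ ?_ <;> rw [Ideal.span_le, Set.singleton_subset_iff]
      · exact Submodule.mem_span_singleton.mpr ⟨f - f * e, by rw [smul_eq_mul, hcg]⟩
      · exact Submodule.mem_span_singleton.mpr ⟨u, by rw [smul_eq_mul]⟩
    obtain ⟨h, hhh, hsup⟩ := sup_span_idem he hgg hge
    refine ⟨h, hhh, ?_⟩
    rw [← hsup, ← hspan_cg]
    refine le_antisymm (sup_le le_sup_left ?_) (sup_le le_sup_left ?_) <;>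
      rw [Ideal.span_le, Set.singleton_subset_iff]
    · have hmem : f * e + (f - f * e) ∈
          Ideal.span ({e} : Set J.ringCon.Quotient) ⊔ Ideal.span {f - f * e} :=
        Submodule.add_mem _
          (Submodule.mem_sup_left (Submodule.mem_span_singleton.mpr ⟨f, rfl⟩))
          (Submodule.mem_sup_right (Ideal.subset_span rfl))
      rwa [show f * e + (f - f * e) = f by abel] at hmem
    · exact Submodule.sub_mem _
        (Submodule.mem_sup_right (Ideal.subset_span rfl))
        (Submodule.mem_sup_left (Submodule.mem_span_singleton.mpr ⟨f, rfl⟩))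
  -- every left ideal of the quotient is generated by an idempotent
  have allidem : ∀ I : Ideal J.ringCon.Quotient, ∃ e, e * e = e ∧ I = Ideal.span {e} := by
    intro I
    set 𝒮 : Set (Ideal J.ringCon.Quotient) :=
      {Jd | Jd ≤ I ∧ ∃ e, e * e = e ∧ Jd = Ideal.span {e}} with h𝒮def
    have hbot : (⊥ : Ideal J.ringCon.Quotient) ∈ 𝒮 := by
      refine ⟨bot_le, 0, by rw [mul_zero], ?_⟩
      refine (le_antisymm ?_ bot_le).symm
      rw [Ideal.span_le, Set.singleton_subset_iff]
      exact Submodule.zero_mem ⊥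
    have hmax : ∃ Jm ∈ 𝒮, ∀ J' ∈ 𝒮, ¬Jm < J' := by
      by_contra hcon
      push_neg at hcon
      have hstep : ∀ Jx : {Jy // Jy ∈ 𝒮}, ∃ Jz : {Jy // Jy ∈ 𝒮}, Jx.1 < Jz.1 := by
        rintro ⟨Jx, hJx⟩
        obtain ⟨J2, hJ2, hlt⟩ := hcon Jx hJx
        exact ⟨⟨J2, hJ2⟩, hlt⟩
      choose F hF using hstep
      let σ : ℕ → {Jy // Jy ∈ 𝒮} := fun n => Nat.rec ⟨⊥, hbot⟩ (fun _ Jx => F Jx) n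
      have hσ : ∀ n, (σ n).1 < (σ (n + 1)).1 := fun n => hF (σ n)
      have hσmono : ∀ i j, i ≤ j → (σ i).1 ≤ (σ j).1 := by
        intro i j hij
        induction j with
        | zero => rw [Nat.le_zero.mp hij]
        | succ k ih =>
          rcases Nat.lt_or_ge i (k + 1) with hlt | hge
          · exact le_trans (ih (Nat.lt_succ_iff.mp hlt)) (hσ k).le
          · rw [Nat.le_antisymm hij hge]
      choose ee hee1 hee2 using fun n => (σ n).2.2
      have habs2 : ∀ i j, i ≤ j → ee i * ee j = ee i := by
        intro i j hij
        have hmem : ee i ∈ Ideal.span {ee j} := by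
          have h1 : ee i ∈ (σ i).1 := by rw [hee2 i]; exact Ideal.subset_span rfl
          have h2 := hσmono i j hij h1
          rwa [hee2 j] at h2
        obtain ⟨xx, hxx⟩ := Submodule.mem_span_singleton.mp hmem
        rw [smul_eq_mul] at hxx
        rw [← hxx, mul_assoc, hee1 j]
      refine nochain (fun n => ee (n + 1) - ee (n + 1) * ee n) ?_ ?_ ?_
      · intro n
        exact idem_helper (hee1 (n + 1)) (hee1 n) (habs2 n (n + 1) (Nat.le_succ n))
      · intro i j hij
        exact orth_helper (habs2 (i + 1) (j + 1) (by omega)) (habs2 (i + 1) j (by omega))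
          (habs2 i (j + 1) (by omega)) (habs2 i j (by omega))
      · intro n hzero
        rw [sub_eq_zero] at hzero
        have hle2 : (σ (n + 1)).1 ≤ (σ n).1 := by
          rw [hee2 (n + 1), hee2 n, Ideal.span_le, Set.singleton_subset_iff]
          exact Submodule.mem_span_singleton.mpr ⟨ee (n + 1), by rw [smul_eq_mul, ← hzero]⟩
        exact absurd hle2 (hσ n).2
    obtain ⟨Jm, ⟨hJmI, e, he, hJe⟩, hmaxx⟩ := hmax
    refine ⟨e, he, ?_⟩
    rw [← hJe]
    by_contra hne
    have hlt : Jm < I := lt_of_le_of_ne hJmI (fun hh => hne hh.symm)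
    obtain ⟨x, hxI, hxJm⟩ := SetLike.exists_of_lt hlt
    obtain ⟨e2, he2, hxe2⟩ := idemspan x
    obtain ⟨hh, hhidem, hsup⟩ := supidem e e2 he he2
    have hxmem : x ∈ Ideal.span {hh} := by
      rw [← hsup]
      exact Submodule.mem_sup_right (by rw [← hxe2]; exact Ideal.subset_span rfl)
    refine hmaxx (Ideal.span {hh}) ⟨?_, hh, hhidem, rfl⟩ ?_
    · rw [← hsup]
      refine sup_le ?_ ?_
      · rw [← hJe]; exact hJmI
      · rw [← hxe2, Ideal.span_le, Set.singleton_subset_iff]; exact hxI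
    · refine lt_of_le_of_ne ?_ ?_
      · rw [hJe, ← hsup]; exact le_sup_left
      · intro hJmhh
        exact hxJm (by rw [hJmhh]; exact hxmem)
  -- conclude: the quotient is semisimple
  refine { toComplementedLattice := ⟨fun I => ?_⟩ }
  obtain ⟨e, he, rfl⟩ := allidem I
  refine ⟨Ideal.span {1 - e}, ?_, ?_⟩
  · rw [Submodule.disjoint_def]
    intro x hx1 hx2
    obtain ⟨a1, ha1⟩ := Submodule.mem_span_singleton.mp hx1
    obtain ⟨a2, ha2⟩ := Submodule.mem_span_singleton.mp hx2
    rw [smul_eq_mul] at ha1 ha2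
    have hxe : x * e = x := by rw [← ha1, mul_assoc, he]
    have hxe0 : x * e = 0 := by
      rw [← ha2, mul_assoc, sub_mul, one_mul, he, sub_self, mul_zero]
    rw [← hxe, hxe0]
  · rw [codisjoint_iff, eq_top_iff]
    intro x _
    refine Submodule.mem_sup.mpr ⟨x * e, Submodule.mem_span_singleton.mpr ⟨x, rfl⟩,
      x * (1 - e), Submodule.mem_span_singleton.mpr ⟨x, rfl⟩, by noncomm_ring⟩

end BRCP


namespace BRCP

open MulOpposite

attribute [local instance] Classical.propDecidable

section CP

variable {G R : Type} [Group G] [Ring R] {pa : UnitalTwistedPartialAction G R}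
variable {A : Type} [Ring A] {δ : G → R → A}

theorem inv_one_eq (pa : UnitalTwistedPartialAction G R) (x : R) : pa.inv 1 x = x := by
  have h := pa.inv_act 1 x (by rw [inv_one, pa.e_one, one_mul])
  rwa [pa.act_one] at h

theorem delta_zero (hcp : IsCrossedProduct pa A δ) (g : G) : δ g 0 = 0 := by
  have h := hcp.add g 0 0
  rw [add_zero] at h
  exact (add_eq_left.mp h.symm)

theorem delta_sub (hcp : IsCrossedProduct pa A δ) (g : G) (a b : R) :
    δ g (a - b) = δ g a - δ g b := by
  have h := hcp.add g (a - b) b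
  rw [sub_add_cancel] at h
  rw [eq_sub_iff_add_eq, ← h]

/-- The canonical embedding `R → A`, `r ↦ r δ_e`. -/
def iota (hcp : IsCrossedProduct pa A δ) : R →+* A where
  toFun r := δ 1 r
  map_one' := hcp.one
  map_mul' a b := by
    have h := hcp.mul 1 1 a b (by rw [pa.e_one, one_mul]) (by rw [pa.e_one, one_mul])
    rw [h, one_mul, pa.act_one, inv_one_eq, pa.w_one_left, pa.e_one, mul_one]
  map_zero' := delta_zero hcp 1
  map_add' a b := hcp.add 1 a b

theorem iota_apply (hcp : IsCrossedProduct pa A δ) (r : R) : iota hcp r = δ 1 r := rfl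

theorem iota_mul_delta (hcp : IsCrossedProduct pa A δ) (r : R) (g : G) (a : R)
    (ha : pa.e g * a = a) : iota hcp r * δ g a = δ g (r * a) := by
  have h := hcp.mul 1 g r a (by rw [pa.e_one, one_mul]) ha
  rw [iota_apply, h, one_mul, pa.act_one, inv_one_eq, pa.w_one_left]
  congr 1
  rw [mul_assoc, ← pa.central, ha]

theorem delta_mul_iota (hcp : IsCrossedProduct pa A δ) (g : G) (a : R) (r : R)
    (ha : pa.e g * a = a) :
    δ g a * iota hcp r = δ g (pa.act g (pa.inv g a * r) * pa.e g) := by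
  have h := hcp.mul g 1 a r ha (by rw [pa.e_one, one_mul])
  rw [iota_apply, h, mul_one, pa.w_one_right]

theorem e_absorb (pa : UnitalTwistedPartialAction G R) (g : G) (X : R) :
    pa.e g * (X * pa.e g) = X * pa.e g := by
  rw [pa.central, mul_assoc, pa.idem]

/-- indicator extension of a finite decomposition -/
theorem sum_indicator_ext (hcp : IsCrossedProduct pa A δ) (s t : Finset G) (a : G → R) :
    ∑ g ∈ s ∪ t, δ g (if g ∈ s then a g else 0) = ∑ g ∈ s, δ g (a g) := by
  rw [← Finset.sum_subset Finset.subset_union_left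
    (fun g _ hg => by rw [if_neg hg, delta_zero hcp])]
  exact Finset.sum_congr rfl fun g hg => by rw [if_pos hg]

theorem coeff_eq (hcp : IsCrossedProduct pa A δ) (s t : Finset G) (a b : G → R)
    (ha : ∀ g, pa.e g * a g = a g) (hb : ∀ g, pa.e g * b g = b g)
    (h : ∑ g ∈ s, δ g (a g) = ∑ g ∈ t, δ g (b g)) :
    (if (1 : G) ∈ s then a 1 else 0) = if (1 : G) ∈ t then b 1 else 0 := by
  have hsum : ∑ g ∈ s ∪ t,
      δ g ((if g ∈ s then a g else 0) - (if g ∈ t then b g else 0)) = 0 := by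
    have hsplit : ∀ g, δ g ((if g ∈ s then a g else 0) - (if g ∈ t then b g else 0))
        = δ g (if g ∈ s then a g else 0) - δ g (if g ∈ t then b g else 0) :=
      fun g => delta_sub hcp g _ _
    rw [Finset.sum_congr rfl fun g _ => hsplit g, Finset.sum_sub_distrib,
      sum_indicator_ext hcp s t a, Finset.union_comm]
    rw [sum_indicator_ext hcp t s b, h, sub_self]
  have hind := hcp.indep (s ∪ t)
    (fun g => (if g ∈ s then a g else 0) - (if g ∈ t then b g else 0))
    (fun g => by
      rw [mul_sub]
      congr 1
      · split_ifs with hg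
        · exact ha g
        · exact mul_zero _
      · split_ifs with hg
        · exact hb g
        · exact mul_zero _) hsum
  by_cases h1s : (1 : G) ∈ s <;> by_cases h1t : (1 : G) ∈ t
  · have := hind 1 (Finset.mem_union_left _ h1s)
    simp only [h1s, h1t, if_true, sub_eq_zero] at this
    simp only [h1s, h1t, if_true]
    exact this
  · have := hind 1 (Finset.mem_union_left _ h1s)
    simp only [h1s, h1t, if_true, if_false, sub_zero] at this
    simp only [h1s, h1t, if_true, if_false]
    exact this
  · have := hind 1 (Finset.mem_union_right _ h1t)
    simp only [h1s, h1t, if_true, if_false, zero_sub, neg_eq_zero] at this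
    simp only [h1s, h1t, if_true, if_false]
    exact this.symm
  · simp only [h1s, h1t, if_false]

/-- the coefficient of the identity component -/
noncomputable def piE (hcp : IsCrossedProduct pa A δ) (x : A) : R :=
  if (1 : G) ∈ (hcp.span x).choose then (hcp.span x).choose_spec.choose 1 else 0

theorem piE_eq (hcp : IsCrossedProduct pa A δ) (x : A) (s : Finset G) (a : G → R)
    (ha : ∀ g, pa.e g * a g = a g) (hx : x = ∑ g ∈ s, δ g (a g)) :
    piE hcp x = if (1 : G) ∈ s then a 1 else 0 := by
  obtain ⟨ha0, hx0⟩ := (hcp.span x).choose_spec.choose_spec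
  exact coeff_eq hcp _ s _ a ha0 ha (by rw [← hx0, ← hx])

theorem piE_iota (hcp : IsCrossedProduct pa A δ) (r : R) : piE hcp (iota hcp r) = r := by
  have h := piE_eq hcp (iota hcp r) {1} (fun g => if g = 1 then r else 0)
    (fun g => by
      split_ifs with hg
      · rw [hg, pa.e_one, one_mul]
      · exact mul_zero _)
    (by rw [Finset.sum_singleton, if_pos rfl, iota_apply])
  rw [h]
  simp

theorem piE_one (hcp : IsCrossedProduct pa A δ) : piE hcp 1 = 1 := by
  have := piE_iota hcp 1
  rwa [map_one] at this

theorem piE_zero (hcp : IsCrossedProduct pa A δ) : piE hcp 0 = 0 := by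
  have := piE_iota hcp 0
  rwa [map_zero] at this

theorem piE_add (hcp : IsCrossedProduct pa A δ) (x y : A) :
    piE hcp (x + y) = piE hcp x + piE hcp y := by
  obtain ⟨s, a, ha, hx⟩ := hcp.span x
  obtain ⟨t, b, hb, hy⟩ := hcp.span y
  have hxy : ∑ g ∈ s ∪ t,
      δ g ((if g ∈ s then a g else 0) + (if g ∈ t then b g else 0)) = x + y := by
    rw [Finset.sum_congr rfl fun g _ => hcp.add g _ _, Finset.sum_add_distrib,
      sum_indicator_ext hcp s t a, Finset.union_comm s t, sum_indicator_ext hcp t s b,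
      ← hx, ← hy]
  have hcond : ∀ g, pa.e g * ((if g ∈ s then a g else 0) + (if g ∈ t then b g else 0))
      = (if g ∈ s then a g else 0) + (if g ∈ t then b g else 0) := by
    intro g
    rw [mul_add]
    congr 1 <;> split_ifs with hg
    · exact ha g
    · exact mul_zero _
    · exact hb g
    · exact mul_zero _
  rw [piE_eq hcp (x + y) (s ∪ t) _ hcond hxy.symm, piE_eq hcp x s a ha hx,
    piE_eq hcp y t b hb hy]
  by_cases h1s : (1 : G) ∈ s <;> by_cases h1t : (1 : G) ∈ t <;>
    simp [h1s, h1t, Finset.mem_union]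

theorem piE_lmul (hcp : IsCrossedProduct pa A δ) (r : R) (x : A) :
    piE hcp (iota hcp r * x) = r * piE hcp x := by
  obtain ⟨s, a, ha, hx⟩ := hcp.span x
  have hrx : iota hcp r * x = ∑ g ∈ s, δ g (r * a g) := by
    rw [hx, Finset.mul_sum]
    exact Finset.sum_congr rfl fun g _ => iota_mul_delta hcp r g (a g) (ha g)
  have hcond : ∀ g, pa.e g * (r * a g) = r * a g := by
    intro g
    rw [← mul_assoc, pa.central, mul_assoc, ha g]
  rw [piE_eq hcp _ s _ hcond hrx, piE_eq hcp x s a ha hx]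
  split_ifs with h1s
  · rfl
  · rw [mul_zero]

theorem piE_rmul (hcp : IsCrossedProduct pa A δ) (x : A) (r : R) :
    piE hcp (x * iota hcp r) = piE hcp x * r := by
  obtain ⟨s, a, ha, hx⟩ := hcp.span x
  have hxr : x * iota hcp r = ∑ g ∈ s, δ g (pa.act g (pa.inv g (a g) * r) * pa.e g) := by
    rw [hx, Finset.sum_mul]
    exact Finset.sum_congr rfl fun g _ => delta_mul_iota hcp g (a g) r (ha g)
  have hcond : ∀ g, pa.e g * (pa.act g (pa.inv g (a g) * r) * pa.e g)
      = pa.act g (pa.inv g (a g) * r) * pa.e g := fun g => e_absorb pa g _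
  rw [piE_eq hcp _ s _ hcond hxr, piE_eq hcp x s a ha hx]
  split_ifs with h1s
  · rw [pa.act_one, inv_one_eq, pa.e_one, mul_one]
  · rw [zero_mul]

theorem isUnit_of_iota (hcp : IsCrossedProduct pa A δ) (r : R)
    (h : IsUnit (iota hcp r)) : IsUnit r := by
  obtain ⟨u, hu⟩ := h
  have hl : piE hcp (↑u⁻¹ : A) * r = 1 := by
    have h1 : (↑u⁻¹ : A) * iota hcp r = 1 := by rw [← hu]; exact u.inv_mul
    have := piE_rmul hcp (↑u⁻¹ : A) r
    rw [h1, piE_one hcp] at this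
    exact this.symm
  have hr : r * piE hcp (↑u⁻¹ : A) = 1 := by
    have h1 : iota hcp r * (↑u⁻¹ : A) = 1 := by rw [← hu]; exact u.mul_inv
    have := piE_lmul hcp r (↑u⁻¹ : A)
    rw [h1, piE_one hcp] at this
    exact this.symm
  exact isUnit_of_left_right hl hr

end CP

end BRCP

namespace BRCP

theorem isUnit_of_quotient_unit {A : Type} [Ring A] {a : A}
    (h : IsUnit ((TwoSidedIdeal.jacobson (⊥ : TwoSidedIdeal A)).ringCon.mk' a)) :
    IsUnit a := by
  set J : TwoSidedIdeal A := TwoSidedIdeal.jacobson (⊥ : TwoSidedIdeal A) with hJ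
  have hsurj : Function.Surjective J.ringCon.mk' := fun t => Quot.inductionOn t fun b => ⟨b, rfl⟩
  have hmem : ∀ x : A, J.ringCon.mk' x = 0 → x ∈ J := by
    intro x hx
    have h0 : J.ringCon.mk' x = J.ringCon.mk' 0 := by rw [hx, map_zero]
    have h1 : J.ringCon x 0 := (RingCon.eq _).mp h0
    exact h1
  obtain ⟨u, hu⟩ := h
  obtain ⟨v, hv⟩ := hsurj (↑u⁻¹ : _)
  have hva : J.ringCon.mk' (v * a - 1) = 0 := by
    rw [map_sub, map_mul, hv, ← hu, map_one, u.inv_mul, sub_self]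
  have hav : J.ringCon.mk' (a * v - 1) = 0 := by
    rw [map_sub, map_mul, hv, ← hu, map_one, u.mul_inv, sub_self]
  obtain ⟨u1, hu1⟩ := isUnit_one_add_jacobson (hmem _ hva)
  obtain ⟨u2, hu2⟩ := isUnit_one_add_jacobson (hmem _ hav)
  have h1va : (1 : A) + (v * a - 1) = v * a := by abel
  have h1av : (1 : A) + (a * v - 1) = a * v := by abel
  rw [h1va] at hu1
  rw [h1av] at hu2
  have hl : ((↑u1⁻¹ : A) * v) * a = 1 := by rw [mul_assoc, ← hu1, u1.inv_mul]
  have hr : a * (v * (↑u2⁻¹ : A)) = 1 := by rw [← mul_assoc, ← hu2, u2.mul_inv]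
  exact isUnit_of_left_right hl hr

end BRCP

/-- Let `α` be a unital twisted partial action of `G` on a
unital ring `R`.  If `R*_{α,w}G` is right artinian (resp. right noetherian,
semilocal), then so is `R`. -/
theorem base_ring_of_crossedProduct
    {G R : Type} [Group G] [Ring R]
    (pa : UnitalTwistedPartialAction G R)
    (A : Type) [Ring A] (δ : G → R → A)
    (hcp : IsCrossedProduct pa A δ) :
    (IsRightArtinianRing A → IsRightArtinianRing R) ∧
    (IsRightNoetherianRing A → IsRightNoetherianRing R) ∧
    (IsSemilocalRing A → IsSemilocalRing R) := by
  classical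
  set ι : R →+* A := BRCP.iota hcp with hι
  let ιop : Rᵐᵒᵖ →+* Aᵐᵒᵖ := RingHom.op ι
  have hcomap : ∀ I : Ideal Rᵐᵒᵖ, Ideal.comap ιop (Ideal.map ιop I) = I := by
    intro I
    refine le_antisymm ?_ Ideal.le_comap_map
    intro x hx
    have hx' : ιop x ∈ Ideal.map ιop I := hx
    have hkey : ∀ z : Aᵐᵒᵖ, z ∈ Ideal.map ιop I → ∀ u : A,
        MulOpposite.op (BRCP.piE hcp (MulOpposite.unop z * u)) ∈ I := by
      intro z hz
      rw [Ideal.map] at hz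
      induction hz using Submodule.span_induction with
      | mem w hw =>
        obtain ⟨i, hiI, rfl⟩ := hw
        intro u
        have h1 : MulOpposite.unop (ιop i) * u = ι (MulOpposite.unop i) * u := rfl
        rw [h1, BRCP.piE_lmul hcp]
        have h2 : MulOpposite.op (MulOpposite.unop i * BRCP.piE hcp u)
            = MulOpposite.op (BRCP.piE hcp u) • i := rfl
        rw [h2]
        exact Submodule.smul_mem I _ hiI
      | zero =>
        intro u
        have : MulOpposite.unop (0 : Aᵐᵒᵖ) * u = 0 := by rw [MulOpposite.unop_zero, zero_mul]
        rw [this, BRCP.piE_zero hcp, MulOpposite.op_zero]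
        exact Submodule.zero_mem I
      | add z₁ z₂ hz₁ hz₂ ih₁ ih₂ =>
        intro u
        have : MulOpposite.unop (z₁ + z₂) * u
            = MulOpposite.unop z₁ * u + MulOpposite.unop z₂ * u := by
          rw [MulOpposite.unop_add, add_mul]
        rw [this, BRCP.piE_add hcp, MulOpposite.op_add]
        exact Submodule.add_mem I (ih₁ u) (ih₂ u)
      | smul a z hzmem ih =>
        intro u
        have : MulOpposite.unop (a • z) * u
            = MulOpposite.unop z * (MulOpposite.unop a * u) := by
          rw [smul_eq_mul, MulOpposite.unop_mul, mul_assoc]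
        rw [this]
        exact ih (MulOpposite.unop a * u)
    have := hkey (ιop x) hx' 1
    have h3 : MulOpposite.unop (ιop x) * 1 = ι (MulOpposite.unop x) := by rw [mul_one]; rfl
    rw [h3, BRCP.piE_iota hcp, MulOpposite.op_unop] at this
    exact this
  have hstrict : StrictMono (fun I : Ideal Rᵐᵒᵖ => Ideal.map ιop I) := by
    intro I J hIJ
    refine lt_of_le_of_ne (Ideal.map_mono hIJ.le) ?_
    intro heq
    have heq' : Ideal.map ιop I = Ideal.map ιop J := heq
    exact hIJ.ne (by rw [← hcomap I, ← hcomap J, heq'])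
  refine ⟨?_, ?_, ?_⟩
  · intro hA
    haveI : WellFoundedLT (Ideal Aᵐᵒᵖ) := hA
    exact hstrict.wellFoundedLT
  · intro hN
    haveI : IsNoetherianRing Aᵐᵒᵖ := hN
    haveI : WellFoundedGT (Ideal Aᵐᵒᵖ) := isNoetherian_iff'.mp hN
    exact isNoetherian_iff'.mpr hstrict.wellFoundedGT
  · intro hsl
    haveI : IsSemisimpleRing
        (TwoSidedIdeal.jacobson (⊥ : TwoSidedIdeal A)).ringCon.Quotient := hsl
    have hloc : ∀ r : R,
        IsUnit (((TwoSidedIdeal.jacobson (⊥ : TwoSidedIdeal A)).ringCon.mk'.comp ι) r) →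
        IsUnit r := by
      intro r hr
      exact BRCP.isUnit_of_iota hcp r (BRCP.isUnit_of_quotient_unit hr)
    exact BRCP.semilocal_of_local
      ((TwoSidedIdeal.jacobson (⊥ : TwoSidedIdeal A)).ringCon.mk'.comp ι) hloc
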